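/- Assume ∫_{(0,1]} x^{-1} dΛ(x) = ∞. Then for every fixed a ∈ (0,1) there exist a constant C₃ ∈ (0,∞) (depending on Λ and a) and an integer b₀ such that for all b ≥ b₀: γ_b^a ≤ γ_b ≤ C₃ γ_b^a. -/

import Mathlib

open MeasureTheory Finset Filter

/-- `lamBK μ b k` is `λ_{b,k} = ∫_{[0,1]} x^{k-2} (1-x)^{b-k} dΛ(x)`. -/
noncomputable def lamBK (μ : Measure ℝ) (b k : ℕ) : ℝ :=
  ∫ x in Set.Icc (0:ℝ) 1, x ^ (k - 2) * (1 - x) ^ (b - k) ∂μ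

/-- `lamB μ b` is `λ_b = Σ_{k=2}^b C(b,k) λ_{b,k}`. -/
noncomputable def lamB (μ : Measure ℝ) (b : ℕ) : ℝ :=
  ∑ k ∈ Finset.Icc 2 b, (b.choose k : ℝ) * lamBK μ b k

/-- `gamB μ b` is `γ_b = Σ_{k=2}^b C(b,k) (k-1) λ_{b,k}`. -/
noncomputable def gamB (μ : Measure ℝ) (b : ℕ) : ℝ :=
  ∑ k ∈ Finset.Icc 2 b, (b.choose k : ℝ) * ((k : ℝ) - 1) * lamBK μ b k

/-! ### Auxiliary definitions and lemmas -/

/-- The density `F_b(x) = Σ_{k=2}^b C(b,k)(k-1) x^{k-2}(1-x)^{b-k}` so that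
`γ_b = ∫ F_b dμ`. -/
noncomputable def Fb (b : ℕ) (x : ℝ) : ℝ :=
  ∑ k ∈ Finset.Icc 2 b, (b.choose k : ℝ) * ((k : ℝ) - 1) * (x ^ (k - 2) * (1 - x) ^ (b - k))

lemma sum_k_choose (b : ℕ) (x y : ℝ) :
    ∑ k ∈ range (b+1), (k:ℝ) * (b.choose k) * (x^k * y^(b-k)) = b * x * (x+y)^(b-1) := by
  cases b with
  | zero => simp
  | succ m =>
    rw [Finset.sum_range_succ']
    have key : ∀ j : ℕ, (((j:ℕ)+1:ℕ):ℝ) * (((m+1).choose (j+1) : ℕ):ℝ) = ((m:ℝ)+1) * (m.choose j : ℝ) := by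
      intro j
      have h2 : ((m+1) * m.choose j : ℕ) = ((m+1).choose (j+1) * (j+1) : ℕ) :=
        Nat.add_one_mul_choose_eq m j
      have := congrArg (fun n : ℕ => (n:ℝ)) h2
      push_cast at this ⊢
      linarith [this]
    have h1 : ∑ j ∈ range (m+1), ((j+1:ℕ):ℝ) * ((m+1).choose (j+1)) * (x^(j+1) * y^(m+1-(j+1)))
        = ((m:ℝ)+1) * x * ∑ j ∈ range (m+1), (m.choose j : ℝ) * (x^j * y^(m-j)) := by
      rw [Finset.mul_sum]
      refine Finset.sum_congr rfl fun j _ => ?_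
      rw [Nat.succ_sub_succ, key j]; ring
    rw [h1]
    have h2 : ∑ j ∈ range (m+1), (m.choose j : ℝ) * (x^j * y^(m-j)) = (x+y)^m := by
      rw [add_pow]
      exact Finset.sum_congr rfl fun j _ => by ring
    rw [h2]
    push_cast
    ring_nf

lemma sum_choose' (b : ℕ) (x y : ℝ) :
    ∑ k ∈ range (b+1), (b.choose k : ℝ) * (x^k * y^(b-k)) = (x+y)^b := by
  rw [add_pow]
  exact Finset.sum_congr rfl fun j _ => by ring

lemma Fb_mul_sq {b : ℕ} (hb : 2 ≤ b) (x : ℝ) :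
    Fb b x * x^2 = b * x - 1 + (1-x)^b := by
  have h1 : Fb b x * x^2
      = ∑ k ∈ Finset.Icc 2 b, (b.choose k : ℝ) * ((k : ℝ) - 1) * (x ^ k * (1 - x) ^ (b - k)) := by
    rw [Fb, Finset.sum_mul]
    refine Finset.sum_congr rfl fun k hk => ?_
    have hk2 : 2 ≤ k := (Finset.mem_Icc.mp hk).1
    have : x ^ (k-2) * x^2 = x ^ k := by
      rw [← pow_add]; congr 1; omega
    calc (b.choose k : ℝ) * ((k : ℝ) - 1) * (x ^ (k - 2) * (1 - x) ^ (b - k)) * x^2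
        = (b.choose k : ℝ) * ((k : ℝ) - 1) * ((x ^ (k-2) * x^2) * (1 - x) ^ (b - k)) := by ring
      _ = _ := by rw [this]
  rw [h1]
  set y := 1 - x with hy
  have hsplit : ∑ k ∈ range (b+1), (b.choose k : ℝ) * ((k : ℝ) - 1) * (x ^ k * y ^ (b - k))
      = (b.choose 0 : ℝ) * ((0:ℝ) - 1) * (x^0 * y^(b-0))
        + (b.choose 1 : ℝ) * ((1:ℝ) - 1) * (x^1 * y^(b-1))
        + ∑ k ∈ Finset.Icc 2 b, (b.choose k : ℝ) * ((k : ℝ) - 1) * (x ^ k * y ^ (b - k)) := by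
    rw [Finset.range_eq_Ico, ← Finset.sum_Ico_consecutive _ (by omega : 0 ≤ 2) (by omega : 2 ≤ b+1)]
    have : Finset.Ico 2 (b+1) = Finset.Icc 2 b := by rw [Finset.Ico_add_one_right_eq_Icc]
    rw [this]
    have : ∑ k ∈ Finset.Ico 0 2, (b.choose k : ℝ) * ((k : ℝ) - 1) * (x ^ k * y ^ (b - k))
        = (b.choose 0 : ℝ) * ((0:ℝ) - 1) * (x^0 * y^(b-0))
          + (b.choose 1 : ℝ) * ((1:ℝ) - 1) * (x^1 * y^(b-1)) := by
      rw [Finset.sum_Ico_eq_sum_range]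
      rw [Finset.sum_range_succ, Finset.sum_range_one]
      norm_num
    rw [this]
  have hfull : ∑ k ∈ range (b+1), (b.choose k : ℝ) * ((k : ℝ) - 1) * (x ^ k * y ^ (b - k))
      = b * x * (x+y)^(b-1) - (x+y)^b := by
    have : ∀ k ∈ range (b+1), (b.choose k : ℝ) * ((k : ℝ) - 1) * (x ^ k * y ^ (b - k))
        = (k:ℝ) * (b.choose k) * (x^k * y^(b-k)) - (b.choose k : ℝ) * (x^k * y^(b-k)) := by
      intro k _; ring
    rw [Finset.sum_congr rfl this, Finset.sum_sub_distrib, sum_k_choose, sum_choose']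
  have hxy : x + y = 1 := by rw [hy]; ring
  have := hsplit.symm.trans hfull
  rw [hxy] at this
  simp only [one_pow] at this
  norm_num at this
  linarith [this]

lemma Fb_continuous (b : ℕ) : Continuous (Fb b) := by
  apply continuous_finset_sum
  intro k _
  fun_prop

lemma Fb_nonneg (b : ℕ) {x : ℝ} (hx0 : 0 ≤ x) (hx1 : x ≤ 1) : 0 ≤ Fb b x := by
  apply Finset.sum_nonneg
  intro k hk
  have hk2 : 2 ≤ k := (Finset.mem_Icc.mp hk).1
  have h1 : (1:ℝ) ≤ (k:ℝ) := by exact_mod_cast Nat.one_le_of_lt hk2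
  have h2 : (0:ℝ) ≤ 1 - x := by linarith
  exact mul_nonneg (mul_nonneg (Nat.cast_nonneg _) (by linarith))
    (mul_nonneg (pow_nonneg hx0 _) (pow_nonneg h2 _))

lemma term_integrableOn (ν : Measure ℝ) [IsFiniteMeasure ν] (b k : ℕ) :
    IntegrableOn (fun x : ℝ => (b.choose k : ℝ) * ((k : ℝ) - 1) * (x ^ (k - 2) * (1 - x) ^ (b - k)))
      (Set.Icc (0:ℝ) 1) ν := by
  apply Continuous.integrableOn_Icc
  fun_prop

lemma gamB_eq (ν : Measure ℝ) [IsFiniteMeasure ν] (b : ℕ) :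
    gamB ν b = ∫ x in Set.Icc (0:ℝ) 1, Fb b x ∂ν := by
  unfold gamB Fb lamBK
  rw [integral_finset_sum _ (fun k _ => term_integrableOn ν b k)]
  refine Finset.sum_congr rfl fun k _ => ?_
  rw [MeasureTheory.integral_const_mul]

lemma Fb_integrableOn (ν : Measure ℝ) [IsFiniteMeasure ν] (b : ℕ) {s : Set ℝ}
    (hs : s ⊆ Set.Icc (0:ℝ) 1) : IntegrableOn (Fb b) s ν := by
  refine IntegrableOn.mono_set ?_ hs
  exact (Fb_continuous b).integrableOn_Icc

lemma Fb_le {b : ℕ} (hb : 2 ≤ b) {x : ℝ} (hx0 : 0 < x) (hx1 : x ≤ 1) :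
    Fb b x ≤ b / x := by
  have h := Fb_mul_sq hb x
  have h1 : (1-x)^b ≤ 1 := pow_le_one₀ (by linarith) (by linarith)
  have hx2 : (0:ℝ) < x^2 := pow_pos hx0 2
  have h2 : Fb b x * x^2 ≤ (b / x) * x^2 := by
    have : (b / x) * x^2 = b * x := by field_simp
    rw [this, h]; linarith
  exact le_of_mul_le_mul_right h2 hx2

lemma Fb_ge {b : ℕ} (hb : 2 ≤ b) {x : ℝ} (hx0 : 0 < x) (hx1 : x ≤ 1) :
    (b:ℝ) * (1/x) - 1/x^2 ≤ Fb b x := by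
  have h := Fb_mul_sq hb x
  have h1 : (0:ℝ) ≤ (1-x)^b := pow_nonneg (by linarith) b
  have hx2 : (0:ℝ) < x^2 := pow_pos hx0 2
  have h2 : ((b:ℝ) * (1/x) - 1/x^2) * x^2 ≤ Fb b x * x^2 := by
    have : ((b:ℝ) * (1/x) - 1/x^2) * x^2 = b * x - 1 := by field_simp
    rw [this, h]; linarith
  exact le_of_mul_le_mul_right h2 hx2

lemma exists_eps (μ : Measure ℝ) [IsFiniteMeasure μ] {a : ℝ} (ha : 0 < a) (ha1 : a < 1)
    (hinf : ∫⁻ x in Set.Ioc (0:ℝ) 1, ENNReal.ofReal (1 / x) ∂μ = ⊤) (T : ℝ) :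
    ∃ ε : ℝ, 0 < ε ∧ ε < a ∧ T ≤ ∫ x in Set.Ioc ε a, 1 / x ∂μ := by
  have hg : Measurable (fun x : ℝ => ENNReal.ofReal (1 / x)) := by
    apply Measurable.ennreal_ofReal; fun_prop
  have htail : ∫⁻ x in Set.Ioc a 1, ENNReal.ofReal (1 / x) ∂μ ≠ ⊤ := by
    have hb : ∫⁻ x in Set.Ioc a 1, ENNReal.ofReal (1 / x) ∂μ
        ≤ ∫⁻ _ in Set.Ioc a 1, ENNReal.ofReal (1 / a) ∂μ := by
      apply setLIntegral_mono' measurableSet_Ioc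
      intro x hx
      exact ENNReal.ofReal_le_ofReal (by
        apply one_div_le_one_div_of_le ha hx.1.le)
    refine ne_top_of_le_ne_top ?_ hb
    rw [lintegral_const]
    exact ENNReal.mul_ne_top ENNReal.ofReal_ne_top (measure_ne_top _ _)
  have h0a : ∫⁻ x in Set.Ioc (0:ℝ) a, ENNReal.ofReal (1 / x) ∂μ = ⊤ := by
    by_contra h
    have hsplit : Set.Ioc (0:ℝ) 1 = Set.Ioc 0 a ∪ Set.Ioc a 1 :=
      (Set.Ioc_union_Ioc_eq_Ioc ha.le ha1.le).symm
    have : ∫⁻ x in Set.Ioc (0:ℝ) 1, ENNReal.ofReal (1 / x) ∂μ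
        ≤ (∫⁻ x in Set.Ioc (0:ℝ) a, ENNReal.ofReal (1 / x) ∂μ)
          + ∫⁻ x in Set.Ioc a 1, ENNReal.ofReal (1 / x) ∂μ := by
      rw [hsplit]; exact lintegral_union_le _ _ _
    rw [hinf] at this
    exact (ENNReal.add_ne_top.mpr ⟨h, htail⟩) (top_le_iff.mp this)
  set s : ℕ → Set ℝ := fun n => Set.Ioc (a / (n + 2)) a with hs
  have hmono : Monotone s := by
    intro n m hnm
    apply Set.Ioc_subset_Ioc_left
    apply div_le_div_of_nonneg_left ha.le (by positivity)
    have : (n:ℝ) ≤ m := Nat.cast_le.mpr hnm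
    linarith
  have hunion : (⋃ n, s n) = Set.Ioc (0:ℝ) a := by
    ext x
    simp only [Set.mem_iUnion, Set.mem_Ioc, hs]
    constructor
    · rintro ⟨n, h1, h2⟩
      exact ⟨lt_trans (by positivity) h1, h2⟩
    · rintro ⟨h1, h2⟩
      obtain ⟨n, hn⟩ := exists_nat_gt (a / x)
      refine ⟨n, ?_, h2⟩
      rw [div_lt_iff₀ (by positivity)] at hn ⊢
      nlinarith [h1, hn]
  set ν := μ.withDensity (fun x => ENNReal.ofReal (1 / x)) with hν
  have hνs : ∀ t : Set ℝ, MeasurableSet t → ν t = ∫⁻ x in t, ENNReal.ofReal (1 / x) ∂μ :=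
    fun t ht => withDensity_apply _ ht
  have hsup : (⨆ n, ν (s n)) = ⊤ := by
    rw [← hmono.measure_iUnion, hunion, hνs _ measurableSet_Ioc, h0a]
  obtain ⟨n, hn⟩ : ∃ n, ENNReal.ofReal T < ν (s n) := by
    apply lt_iSup_iff.mp
    rw [hsup]
    exact ENNReal.ofReal_lt_top
  refine ⟨a / (n + 2), by positivity, ?_, ?_⟩
  · rw [div_lt_iff₀ (by positivity)]
    nlinarith
  · set ε := a / ((n:ℝ) + 2) with hε
    have hε0 : 0 < ε := by positivity
    have hfint : IntegrableOn (fun x : ℝ => 1 / x) (Set.Ioc ε a) μ := by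
      apply Measure.integrableOn_of_bounded (M := 1/ε) (measure_ne_top _ _)
      · fun_prop
      · filter_upwards [ae_restrict_mem measurableSet_Ioc] with x hx
        have hx0 : 0 < x := hε0.trans hx.1
        rw [Real.norm_eq_abs, abs_of_pos (one_div_pos.mpr hx0)]
        exact one_div_le_one_div_of_le hε0 hx.1.le
    have hfnn : 0 ≤ᵐ[μ.restrict (Set.Ioc ε a)] (fun x : ℝ => 1 / x) := by
      filter_upwards [ae_restrict_mem measurableSet_Ioc] with x hx
      exact (one_div_pos.mpr (hε0.trans hx.1)).le
    have heq : ENNReal.ofReal (∫ x in Set.Ioc ε a, 1 / x ∂μ)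
        = ∫⁻ x in Set.Ioc ε a, ENNReal.ofReal (1 / x) ∂μ :=
      ofReal_integral_eq_lintegral_ofReal hfint hfnn
    have hlt : ENNReal.ofReal T < ENNReal.ofReal (∫ x in Set.Ioc ε a, 1 / x ∂μ) := by
      rw [heq, ← hνs _ measurableSet_Ioc]
      exact hn
    by_contra hcon
    push_neg at hcon
    exact absurd (ENNReal.ofReal_le_ofReal hcon.le) (not_le.mpr hlt)

theorem gamB_restrict_comparable_of_integral_infinite (μ : Measure ℝ) [IsFiniteMeasure μ]
    (h0 : μ {0} = 0) (h1 : μ {1} = 0)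
    (hsupp : μ ((Set.Icc (0:ℝ) 1)ᶜ) = 0) (hpos : 0 < μ (Set.Icc (0:ℝ) 1))
    (hinf : ∫⁻ x in Set.Ioc (0:ℝ) 1, ENNReal.ofReal (1 / x) ∂μ = ⊤) :
    ∀ a : ℝ, a ∈ Set.Ioo (0:ℝ) 1 →
      ∃ C₃ : ℝ, 0 < C₃ ∧ ∃ b₀ : ℕ, ∀ b : ℕ, b₀ ≤ b →
        gamB (μ.restrict (Set.Icc 0 a)) b ≤ gamB μ b ∧
          gamB μ b ≤ C₃ * gamB (μ.restrict (Set.Icc 0 a)) b := by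
  intro a ha
  obtain ⟨ha0, ha1⟩ := ha
  set Mu : ℝ := (μ Set.univ).toReal with hMu
  have hMu0 : 0 ≤ Mu := ENNReal.toReal_nonneg
  set C₀ : ℝ := Mu / a with hC₀
  have hC₀0 : 0 ≤ C₀ := div_nonneg hMu0 ha0.le
  obtain ⟨ε, hε0, hεa, hI⟩ := exists_eps μ ha0 ha1 hinf (2 * (C₀ + 1))
  set K : ℝ := (1/ε^2) * Mu with hK
  refine ⟨2, by norm_num, max 2 ⌈K⌉₊, ?_⟩
  intro b hb
  have hb2 : 2 ≤ b := le_trans (le_max_left _ _) hb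
  have hbK : K ≤ (b:ℝ) := by
    calc K ≤ (⌈K⌉₊ : ℝ) := Nat.le_ceil K
    _ ≤ (b:ℝ) := Nat.cast_le.mpr (le_trans (le_max_right _ _) hb)
  -- restricted gamB as set integral
  have hres : gamB (μ.restrict (Set.Icc 0 a)) b = ∫ x in Set.Icc (0:ℝ) a, Fb b x ∂μ := by
    rw [gamB_eq, Measure.restrict_restrict measurableSet_Icc,
      Set.inter_eq_self_of_subset_right (Set.Icc_subset_Icc le_rfl ha1.le)]
  -- decomposition of gamB μ
  have hdec : gamB μ b
      = (∫ x in Set.Icc (0:ℝ) a, Fb b x ∂μ) + ∫ x in Set.Ioc a 1, Fb b x ∂μ := by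
    rw [gamB_eq]
    rw [← Set.Icc_union_Ioc_eq_Icc ha0.le ha1.le]
    exact setIntegral_union (by
        rw [Set.disjoint_left]; rintro x ⟨_, hx2⟩ ⟨hx3, _⟩; exact absurd hx2 (not_le.mpr hx3))
      measurableSet_Ioc
      (Fb_integrableOn μ b (Set.Icc_subset_Icc le_rfl ha1.le))
      (Fb_integrableOn μ b (Set.Ioc_subset_Icc_self.trans (Set.Icc_subset_Icc ha0.le le_rfl)))
  -- tail bound
  have htail_nn : 0 ≤ ∫ x in Set.Ioc a 1, Fb b x ∂μ := by
    apply setIntegral_nonneg measurableSet_Ioc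
    intro x hx
    exact Fb_nonneg b (ha0.trans hx.1).le hx.2
  have htail_le : ∫ x in Set.Ioc a 1, Fb b x ∂μ ≤ C₀ * b := by
    have hmono : ∫ x in Set.Ioc a 1, Fb b x ∂μ ≤ ∫ _ in Set.Ioc a 1, (b:ℝ)/a ∂μ := by
      apply setIntegral_mono_on
        (Fb_integrableOn μ b (Set.Ioc_subset_Icc_self.trans (Set.Icc_subset_Icc ha0.le le_rfl)))
        ((integrableOn_const_iff).mpr (Or.inr (measure_lt_top _ _)))
        measurableSet_Ioc
      intro x hx
      calc Fb b x ≤ (b:ℝ)/x := Fb_le hb2 (ha0.trans hx.1) hx.2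
      _ ≤ (b:ℝ)/a := by
        apply div_le_div_of_nonneg_left (Nat.cast_nonneg b) ha0 hx.1.le
    rw [setIntegral_const, smul_eq_mul] at hmono
    calc ∫ x in Set.Ioc a 1, Fb b x ∂μ ≤ (μ (Set.Ioc a 1)).toReal * ((b:ℝ)/a) := hmono
    _ ≤ Mu * ((b:ℝ)/a) := by
      apply mul_le_mul_of_nonneg_right _ (by positivity)
      exact ENNReal.toReal_mono (measure_ne_top _ _) (measure_mono (Set.subset_univ _))
    _ = C₀ * b := by rw [hC₀]; ring
  -- lower bound for restricted gamB
  have hlow : 2 * (C₀ + 1) * b - K ≤ ∫ x in Set.Icc (0:ℝ) a, Fb b x ∂μ := by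
    have hsub : Set.Ioc ε a ⊆ Set.Icc (0:ℝ) 1 :=
      fun x hx => ⟨(hε0.trans hx.1).le, hx.2.trans ha1.le⟩
    have hfint : IntegrableOn (fun x : ℝ => 1 / x) (Set.Ioc ε a) μ := by
      apply Measure.integrableOn_of_bounded (M := 1/ε) (measure_ne_top _ _)
      · fun_prop
      · filter_upwards [ae_restrict_mem measurableSet_Ioc] with x hx
        have hx0 : 0 < x := hε0.trans hx.1
        rw [Real.norm_eq_abs, abs_of_pos (one_div_pos.mpr hx0)]
        exact one_div_le_one_div_of_le hε0 hx.1.le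
    have hstep1 : ∫ x in Set.Ioc ε a, ((b:ℝ) * (1/x) - 1/ε^2) ∂μ
        ≤ ∫ x in Set.Ioc ε a, Fb b x ∂μ := by
      apply setIntegral_mono_on
        ((hfint.const_mul (b:ℝ)).sub ((integrableOn_const_iff).mpr (Or.inr (measure_lt_top _ _))))
        (Fb_integrableOn μ b hsub)
        measurableSet_Ioc
      intro x hx
      have hx0 : 0 < x := hε0.trans hx.1
      have hx1 : x ≤ 1 := hx.2.trans ha1.le
      have he1 : ε^2 ≤ x^2 := by nlinarith [hx.1]
      have he2 : 1/x^2 ≤ 1/ε^2 := one_div_le_one_div_of_le (by positivity) he1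
      have he3 := Fb_ge hb2 hx0 hx1
      simp only [Pi.sub_apply]
      linarith
    have hstep2 : ∫ x in Set.Ioc ε a, Fb b x ∂μ ≤ ∫ x in Set.Icc (0:ℝ) a, Fb b x ∂μ := by
      apply setIntegral_mono_set
        (Fb_integrableOn μ b (Set.Icc_subset_Icc le_rfl ha1.le))
      · filter_upwards [ae_restrict_mem measurableSet_Icc] with x hx
        exact Fb_nonneg b hx.1 (hx.2.trans ha1.le)
      · exact HasSubset.Subset.eventuallyLE
          (fun x hx => ⟨(hε0.trans hx.1).le, hx.2⟩)
    have hcomp : ∫ x in Set.Ioc ε a, ((b:ℝ) * (1/x) - 1/ε^2) ∂μ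
        = (b:ℝ) * (∫ x in Set.Ioc ε a, 1/x ∂μ) - (1/ε^2) * (μ (Set.Ioc ε a)).toReal := by
      rw [integral_sub (hfint.const_mul (b:ℝ))
        ((integrableOn_const_iff).mpr (Or.inr (measure_lt_top _ _)))]
      rw [MeasureTheory.integral_const_mul, setIntegral_const, smul_eq_mul, measureReal_def]
      ring
    have hmu_le : (1/ε^2) * (μ (Set.Ioc ε a)).toReal ≤ K := by
      rw [hK]
      apply mul_le_mul_of_nonneg_left _ (by positivity)
      exact ENNReal.toReal_mono (measure_ne_top _ _) (measure_mono (Set.subset_univ _))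
    have hbI : 2 * (C₀ + 1) * b ≤ (b:ℝ) * ∫ x in Set.Ioc ε a, 1/x ∂μ := by
      calc 2 * (C₀ + 1) * b = (b:ℝ) * (2 * (C₀ + 1)) := by ring
      _ ≤ (b:ℝ) * ∫ x in Set.Ioc ε a, 1/x ∂μ :=
        mul_le_mul_of_nonneg_left hI (Nat.cast_nonneg b)
    rw [hcomp] at hstep1
    linarith [hstep1, hstep2, hmu_le, hbI]
  -- assemble
  have hga_big : C₀ * b ≤ ∫ x in Set.Icc (0:ℝ) a, Fb b x ∂μ := by
    have h1 : (C₀ + 1) * (b:ℝ) ≥ K := by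
      have hb0 : (0:ℝ) ≤ b := Nat.cast_nonneg b
      nlinarith
    nlinarith [hlow]
  constructor
  · rw [hres, hdec]; linarith
  · rw [hres, hdec]; linarith
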